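/- arXiv:2009.03634 — 5 statements merged into one kernel-verified Lean document; each statement's English description precedes it below -/
import Mathlib

section
/- Let m = 2. For every 1-lookahead equilibrium σ of the sequential scheduling game, the makespan satisfies max_i D_i(n) ≤ Σ_{j=1}^n p_j, i.e., the makespan of the equilibrium schedule is at most the sum over all jobs of their minimum processing times. -/
/-!
Sequential scheduling game on two unrelated machines, 1-lookahead players.
Machines are indexed by `Fin 2` (index `0` is machine 1, index `1` is machine 2),
jobs are `1, …, n`, and `p i j` is the processing time of job `j` on machine `i`.
-/

/-- `mload p σ i ℓ`: load of machine `i` after the first `ℓ` jobs under schedule `σ`. -/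
def mload (p : Fin 2 → ℕ → ℝ) (σ : ℕ → Fin 2) (i : Fin 2) (ℓ : ℕ) : ℝ :=
  ∑ j ∈ Finset.Icc 1 ℓ, if σ j = i then p i j else 0

/-- `Evec p σ j i i'`: the load vector `D(j-1)` with `p i j` added to coordinate `i`,
evaluated at coordinate `i'`. -/
def Evec (p : Fin 2 → ℕ → ℝ) (σ : ℕ → Fin 2) (j : ℕ) (i i' : Fin 2) : ℝ :=
  mload p σ i' (j - 1) + if i' = i then p i j else 0

/-- Anticipated cost of job `j` for choosing machine `i`, given predicted responses `r`. -/
def acost (p : Fin 2 → ℕ → ℝ) (σ : ℕ → Fin 2) (r : ℕ → Fin 2 → Fin 2) (j : ℕ) (i : Fin 2) :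
    ℝ :=
  Evec p σ j i i + if r j i = i then p i (j + 1) else 0

/-- `σ` is a 1-lookahead equilibrium for jobs `1, …, n` on two machines:
there are predicted responses `r j i` (an argmin of the follower's cost), each job
`j < n` minimizes its anticipated cost, and the last job `n` minimizes its actual cost. -/
def OneLookEq (n : ℕ) (p : Fin 2 → ℕ → ℝ) (σ : ℕ → Fin 2) : Prop :=
  ∃ r : ℕ → Fin 2 → Fin 2,
    (∀ j, 1 ≤ j → j < n →
      (∀ i i' : Fin 2,
        Evec p σ j i (r j i) + p (r j i) (j + 1) ≤ Evec p σ j i i' + p i' (j + 1)) ∧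
      (∀ i : Fin 2, acost p σ r j (σ j) ≤ acost p σ r j i)) ∧
    (1 ≤ n → ∀ i : Fin 2, mload p σ (σ n) (n - 1) + p (σ n) n ≤ mload p σ i (n - 1) + p i n)

private lemma mload_succ (p : Fin 2 → ℕ → ℝ) (σ : ℕ → Fin 2) (i : Fin 2) (ℓ : ℕ) :
    mload p σ i (ℓ + 1) = mload p σ i ℓ + if σ (ℓ + 1) = i then p i (ℓ + 1) else 0 := by
  unfold mload
  rw [Finset.sum_Icc_succ_top (by omega)]

private lemma msum_succ (p : Fin 2 → ℕ → ℝ) (ℓ : ℕ) :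
    (∑ j ∈ Finset.Icc 1 (ℓ + 1), min (p 0 j) (p 1 j))
      = (∑ j ∈ Finset.Icc 1 ℓ, min (p 0 j) (p 1 j)) + min (p 0 (ℓ + 1)) (p 1 (ℓ + 1)) :=
  Finset.sum_Icc_succ_top (by omega) _

/-- For `m = 2`, every 1-lookahead equilibrium has makespan at most the
sum over all jobs of their minimum processing times. -/
theorem makespan_le_sum_min_of_oneLookEq
    (n : ℕ) (p : Fin 2 → ℕ → ℝ) (hp : ∀ i j, 0 ≤ p i j)
    (σ : ℕ → Fin 2) (hσ : OneLookEq n p σ) :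
    max (mload p σ 0 n) (mload p σ 1 n) ≤ ∑ j ∈ Finset.Icc 1 n, min (p 0 j) (p 1 j) := by
  obtain ⟨r, hstep, hlast⟩ := hσ
  have hq0 : ∀ k, (0:ℝ) ≤ min (p 0 k) (p 1 k) := fun k => le_min (hp 0 k) (hp 1 k)
  have hcover : ∀ x y : Fin 2, y = x ∨ y = x + 1 := by decide
  have hne : ∀ x : Fin 2, x + 1 ≠ x := by decide
  have hchoice : ∀ (x : Fin 2) k,
      min (p 0 k) (p 1 k) = p x k ∨ min (p 0 k) (p 1 k) = p (x + 1) k := by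
    intro x k
    rcases min_choice (p 0 k) (p 1 k) with h | h
    · rcases hcover x 0 with h0 | h0
      · exact Or.inl (h0 ▸ h)
      · exact Or.inr (h0 ▸ h)
    · rcases hcover x 1 with h1 | h1
      · exact Or.inl (h1 ▸ h)
      · exact Or.inr (h1 ▸ h)
  -- the invariant
  have inv : ∀ j, j < n →
      ((∀ i : Fin 2, mload p σ i j
          ≤ (∑ k ∈ Finset.Icc 1 j, min (p 0 k) (p 1 k)) + min (p 0 (j+1)) (p 1 (j+1))) ∧
        (∃ i : Fin 2, mload p σ i j + p i (j+1)
          ≤ (∑ k ∈ Finset.Icc 1 j, min (p 0 k) (p 1 k)) + min (p 0 (j+1)) (p 1 (j+1)))) := by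
    intro j
    induction j with
    | zero =>
      intro _
      have hm0 : ∀ i, mload p σ i 0 = 0 := fun i => by simp [mload]
      have h0 : (∑ k ∈ Finset.Icc 1 0, min (p 0 k) (p 1 k)) = (0:ℝ) := by simp
      constructor
      · intro i
        rw [hm0, h0]
        linarith [hq0 1]
      · rcases hchoice 0 1 with hch | hch
        · exact ⟨0, by rw [hm0, h0]; linarith [hch]⟩
        · exact ⟨0 + 1, by rw [hm0, h0]; linarith [hch]⟩
    | succ ℓ ih =>
      intro hjn
      obtain ⟨IH1, i0, IH2⟩ := ih (by omega)
      obtain ⟨hr, hc⟩ := hstep (ℓ + 1) (by omega) hjn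
      have hE : ∀ i i' : Fin 2,
          Evec p σ (ℓ + 1) i i' = mload p σ i' ℓ + if i' = i then p i (ℓ + 1) else 0 := by
        intro i i'
        simp only [Evec, Nat.add_sub_cancel]
      have hAcost : ∀ i : Fin 2, acost p σ r (ℓ + 1) i
          = mload p σ i ℓ + p i (ℓ + 1)
            + (if r (ℓ + 1) i = i then p i (ℓ + 2) else 0) := by
        intro i
        show Evec p σ (ℓ + 1) i i + _ = _
        rw [hE, if_pos rfl]
      -- F1 : bound on the anticipated cost of machine i0
      have F1 : acost p σ r (ℓ + 1) i0
          ≤ (∑ k ∈ Finset.Icc 1 ℓ, min (p 0 k) (p 1 k)) + min (p 0 (ℓ+1)) (p 1 (ℓ+1))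
            + min (p 0 (ℓ+2)) (p 1 (ℓ+2)) := by
        by_cases hri0 : r (ℓ + 1) i0 = i0
        · rw [hAcost i0, if_pos hri0]
          rcases hchoice i0 (ℓ + 2) with hch | hch
          · linarith [IH2, hch]
          · have hrr := hr i0 (i0 + 1)
            rw [hri0, hE, if_pos rfl, hE, if_neg (hne i0)] at hrr
            linarith [IH1 (i0 + 1), hch, hrr]
        · rw [hAcost i0, if_neg hri0]
          linarith [IH2, hq0 (ℓ + 2)]
      have F2 := hc i0
      have hload : mload p σ (σ (ℓ + 1)) (ℓ + 1)
          = mload p σ (σ (ℓ + 1)) ℓ + p (σ (ℓ + 1)) (ℓ + 1) := by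
        rw [mload_succ, if_pos rfl]
      have hloadle : mload p σ (σ (ℓ + 1)) (ℓ + 1) ≤ acost p σ r (ℓ + 1) (σ (ℓ + 1)) := by
        rw [hload, hAcost]
        by_cases h : r (ℓ + 1) (σ (ℓ + 1)) = σ (ℓ + 1)
        · rw [if_pos h]
          linarith [hp (σ (ℓ + 1)) (ℓ + 2)]
        · rw [if_neg h]
          linarith
      rw [msum_succ]
      constructor
      · intro i
        by_cases hsi : σ (ℓ + 1) = i
        · rw [← hsi]
          linarith [hloadle, F2, F1]
        · rw [mload_succ, if_neg hsi]
          linarith [IH1 i, hq0 (ℓ + 2)]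
      · by_cases hrs : r (ℓ + 1) (σ (ℓ + 1)) = σ (ℓ + 1)
        · refine ⟨σ (ℓ + 1), ?_⟩
          have e := hAcost (σ (ℓ + 1))
          rw [if_pos hrs] at e
          rw [hload]
          linarith [F2, F1, e]
        · rcases hchoice (σ (ℓ + 1)) (ℓ + 2) with hch | hch
          · by_cases hri0 : r (ℓ + 1) i0 = i0
            · -- i0 must be the machine other than σ (ℓ+1); use its response condition
              have hsne : σ (ℓ + 1) ≠ i0 := by
                intro h
                rw [← h] at hri0
                exact hrs hri0
              have hrr := hr i0 (σ (ℓ + 1))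
              rw [hri0, hE, if_pos rfl, hE, if_neg hsne] at hrr
              refine ⟨i0, ?_⟩
              rw [mload_succ, if_neg hsne]
              linarith [hrr, IH1 (σ (ℓ + 1)), hp i0 (ℓ + 1), hch]
            · refine ⟨σ (ℓ + 1), ?_⟩
              have e := hAcost (σ (ℓ + 1))
              rw [if_neg hrs] at e
              have e0 := hAcost i0
              rw [if_neg hri0] at e0
              rw [hload]
              linarith [F2, IH2, hch, e, e0]
          · refine ⟨σ (ℓ + 1) + 1, ?_⟩
            rw [mload_succ, if_neg (fun h => hne (σ (ℓ + 1)) h.symm)]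
            linarith [IH1 (σ (ℓ + 1) + 1), hch]
  -- conclude
  cases n with
  | zero =>
    simp [mload]
  | succ m =>
    obtain ⟨IH1, i0, IH2⟩ := inv m (by omega)
    have hl := hlast (by omega) i0
    simp only [Nat.add_sub_cancel] at hl
    have key : ∀ i : Fin 2, mload p σ i (m + 1)
        ≤ ∑ k ∈ Finset.Icc 1 (m + 1), min (p 0 k) (p 1 k) := by
      intro i
      rw [msum_succ]
      by_cases hsi : σ (m + 1) = i
      · rw [mload_succ, if_pos hsi, ← hsi]
        linarith [hl, IH2]
      · rw [mload_succ, if_neg hsi]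
        linarith [IH1 i]
    exact max_le (key 0) (key 1)
end

section
/- In the sequential scheduling game on m unrelated machines where players have k-lookahead, for every ℓ ∈ {1,…,n} it holds that ΔL([ℓ:n]) ≤ ΔL([ℓ+1:n]) + p_ℓ + ΔL(K_ℓ); that is, the maximum possible increase of the makespan caused by jobs ℓ,…,n (over all initial loads and all k-lookahead plays) is at most the corresponding quantity for jobs ℓ+1,…,n, plus the minimum processing time p_ℓ of job ℓ, plus the maximum possible increase of the makespan caused by the lookahead set K_ℓ of job ℓ playing alone. -/
/-!
Sequential scheduling game on `m` unrelated machines with `k`-lookahead players.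
Machines are indexed by `Fin m`, jobs by natural numbers (a block `[a:b]` of jobs plays
in the order `a, a+1, …, b`), and `p i j` is the processing time of job `j` on machine `i`.
-/

/-- Add the processing time of job `j` on machine `i` to the load vector `D`. -/
def bump {m : ℕ} (p : Fin m → ℕ → ℝ) (D : Fin m → ℝ) (i : Fin m) (j : ℕ) : Fin m → ℝ :=
  fun i' => D i' + if i' = i then p i j else 0

/-- `Out p D js F`: `F` is the final load vector of some backward-induction
(subgame-perfect, ties broken arbitrarily) play of the finite extensive game in which
the jobs in `js` choose machines in order, starting from loads `D`; the payoff of each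
job is the load, after all of these moves, of the machine it chose. -/
inductive Out {m : ℕ} (p : Fin m → ℕ → ℝ) : (Fin m → ℝ) → List ℕ → (Fin m → ℝ) → Prop
  | nil (D : Fin m → ℝ) : Out p D [] D
  | cons (D : Fin m → ℝ) (j : ℕ) (js : List ℕ) (i : Fin m) (cont : Fin m → Fin m → ℝ)
      (hcont : ∀ i', Out p (bump p D i' j) js (cont i'))
      (hopt : ∀ i', cont i i ≤ cont i' i') :
      Out p D (j :: js) (cont i)

/-- `i` is an optimal root move, for the root job `j` followed by the jobs `js`,
of the lookahead game starting from loads `D`, solved by backward induction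
(ties broken arbitrarily). -/
def RootMove {m : ℕ} (p : Fin m → ℕ → ℝ) (D : Fin m → ℝ) (j : ℕ) (js : List ℕ)
    (i : Fin m) : Prop :=
  ∃ cont : Fin m → Fin m → ℝ,
    (∀ i', Out p (bump p D i' j) js (cont i')) ∧ (∀ i', cont i i ≤ cont i' i')

/-- `Play p k D a b F`: starting from initial loads `D`, the block `[a:b]` of jobs plays a
`k`-lookahead play resulting in final loads `F`: the first remaining job `a` makes an
optimal root move of the lookahead game on jobs `a, a+1, …, min (a+k) b`, its processing
time is added to the chosen machine, and the remaining jobs continue. -/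
inductive Play {m : ℕ} (p : Fin m → ℕ → ℝ) (k : ℕ) :
    (Fin m → ℝ) → ℕ → ℕ → (Fin m → ℝ) → Prop
  | nil (D : Fin m → ℝ) (a b : ℕ) (h : b < a) : Play p k D a b D
  | cons (D : Fin m → ℝ) (a b : ℕ) (i : Fin m) (F : Fin m → ℝ) (hab : a ≤ b)
      (hroot : RootMove p D a (List.range' (a + 1) (min (a + k) b - a)) i)
      (hplay : Play p k (bump p D i a) (a + 1) b F) :
      Play p k D a b F

/-- Maximum load of a load vector. -/
noncomputable def maxLoad {m : ℕ} (D : Fin m → ℝ) : ℝ := ⨆ i, D i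

/-- `ΔL([a:b])`: the maximum possible increase of the makespan caused by the block
`[a:b]` of jobs, over all nonnegative initial loads and all `k`-lookahead plays. -/
noncomputable def deltaL {m : ℕ} (p : Fin m → ℕ → ℝ) (k a b : ℕ) : ℝ :=
  sSup {x | ∃ D F : Fin m → ℝ,
    (∀ i, 0 ≤ D i) ∧ Play p k D a b F ∧ x = maxLoad F - maxLoad D}

/-- Minimum processing time of job `j`. -/
noncomputable def pmin {m : ℕ} (p : Fin m → ℕ → ℝ) (j : ℕ) : ℝ := ⨅ i, p i j

section Aux

variable {m : ℕ} {p : Fin m → ℕ → ℝ}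

lemma bump_le (hp : ∀ i j, 0 ≤ p i j) (D : Fin m → ℝ) (i : Fin m) (j : ℕ) (i' : Fin m) :
    D i' ≤ bump p D i j i' := by
  have h0 : 0 ≤ if i' = i then p i j else 0 := by
    split
    · exact hp i j
    · exact le_refl 0
  simp only [bump]
  linarith

lemma bump_nonneg (hp : ∀ i j, 0 ≤ p i j) {D : Fin m → ℝ} (hD : ∀ i, 0 ≤ D i)
    (i : Fin m) (j : ℕ) (i' : Fin m) : 0 ≤ bump p D i j i' :=
  le_trans (hD i') (bump_le hp D i j i')

lemma out_le (hp : ∀ i j, 0 ≤ p i j) {D F : Fin m → ℝ} {js : List ℕ}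
    (h : Out p D js F) : ∀ i, D i ≤ F i := by
  induction h with
  | nil D => exact fun i => le_refl _
  | cons D j js i cont hcont hopt ih =>
      exact fun i' => le_trans (bump_le hp D i j i') (ih i i')

lemma le_maxLoad (D : Fin m → ℝ) (i : Fin m) : D i ≤ maxLoad D :=
  le_ciSup (Set.Finite.bddAbove (Set.finite_range D)) i

lemma maxLoad_le [Nonempty (Fin m)] {D : Fin m → ℝ} {c : ℝ} (h : ∀ i, D i ≤ c) :
    maxLoad D ≤ c := ciSup_le h

lemma maxLoad_bump_le [Nonempty (Fin m)] (hp : ∀ i j, 0 ≤ p i j) (D : Fin m → ℝ)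
    (i : Fin m) (j : ℕ) : maxLoad (bump p D i j) ≤ maxLoad D + p i j := by
  apply maxLoad_le
  intro i'
  have h1 : D i' ≤ maxLoad D := le_maxLoad D i'
  have h2 : (if i' = i then p i j else 0) ≤ p i j := by
    split
    · exact le_refl _
    · exact hp i j
  simp only [bump]
  linarith

lemma out_exists [Nonempty (Fin m)] (p : Fin m → ℕ → ℝ) :
    ∀ (js : List ℕ) (D : Fin m → ℝ), ∃ F, Out p D js F := by
  intro js
  induction js with
  | nil => exact fun D => ⟨D, Out.nil D⟩
  | cons j js ih =>
      intro D
      choose cont hcont using fun i' => ih (bump p D i' j)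
      obtain ⟨i, hi⟩ := Finite.exists_min (fun i' => cont i' i')
      exact ⟨cont i, Out.cons D j js i cont hcont hi⟩

lemma play_exists [Nonempty (Fin m)] (p : Fin m → ℕ → ℝ) (k : ℕ) :
    ∀ (a b : ℕ) (D : Fin m → ℝ), ∃ F, Play p k D a b F := by
  intro a b D
  by_cases hab : b < a
  · exact ⟨D, Play.nil D a b hab⟩
  · push_neg at hab
    choose cont hcont using fun i' =>
      out_exists p (List.range' (a + 1) (min (a + k) b - a)) (bump p D i' a)
    obtain ⟨i, hi⟩ := Finite.exists_min (fun i' => cont i' i')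
    obtain ⟨F, hF⟩ := play_exists p k (a + 1) b (bump p D i a)
    exact ⟨F, Play.cons D a b i F hab ⟨cont, hcont, hi⟩ hF⟩
termination_by a b => b + 1 - a
decreasing_by omega

lemma play_le (hp : ∀ i j, 0 ≤ p i j) {D F : Fin m → ℝ} {k a b : ℕ}
    (h : Play p k D a b F) : ∀ i, D i ≤ F i := by
  induction h with
  | nil D a b h => exact fun i => le_refl _
  | cons D a b i F hab hroot hplay ih =>
      exact fun i' => le_trans (bump_le hp D i a i') (ih i')

lemma supP_nonneg [Nonempty (Fin m)] (hp : ∀ i j, 0 ≤ p i j) (j : ℕ) :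
    0 ≤ ⨆ i, p i j := by
  have i : Fin m := Classical.arbitrary _
  exact le_trans (hp i j) (le_ciSup (f := fun i' => p i' j) (Set.Finite.bddAbove (Set.finite_range _)) i)

lemma play_bound [Nonempty (Fin m)] (hp : ∀ i j, 0 ≤ p i j) {D F : Fin m → ℝ} {k a b : ℕ}
    (h : Play p k D a b F) :
    maxLoad F ≤ maxLoad D + ∑ j ∈ Finset.Ico a (b + 1), ⨆ i, p i j := by
  induction h with
  | nil D a b h =>
      have : 0 ≤ ∑ j ∈ Finset.Ico a (b + 1), ⨆ i, p i j :=
        Finset.sum_nonneg fun j _ => supP_nonneg hp j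
      linarith
  | cons D a b i F hab hroot hplay ih =>
      have h1 : maxLoad (bump p D i a) ≤ maxLoad D + p i a := maxLoad_bump_le hp D i a
      have h2 : p i a ≤ ⨆ i', p i' a := le_ciSup (f := fun i' => p i' a) (Set.Finite.bddAbove (Set.finite_range _)) i
      have h3 : ∑ j ∈ Finset.Ico a (b + 1), ⨆ i', p i' j
          = (⨆ i', p i' a) + ∑ j ∈ Finset.Ico (a + 1) (b + 1), ⨆ i', p i' j :=
        Finset.sum_eq_sum_Ico_succ_bot (by omega) _
      rw [h3]
      linarith

lemma bdd_deltaSet [Nonempty (Fin m)] (hp : ∀ i j, 0 ≤ p i j) (k a b : ℕ) :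
    BddAbove {x | ∃ D F : Fin m → ℝ,
      (∀ i, 0 ≤ D i) ∧ Play p k D a b F ∧ x = maxLoad F - maxLoad D} := by
  refine ⟨∑ j ∈ Finset.Ico a (b + 1), ⨆ i, p i j, ?_⟩
  rintro x ⟨D, F, hD, hplay, rfl⟩
  have := play_bound hp hplay
  linarith

lemma deltaL_nonneg [Nonempty (Fin m)] (hp : ∀ i j, 0 ≤ p i j) (k a b : ℕ) :
    0 ≤ deltaL p k a b := by
  obtain ⟨F, hF⟩ := play_exists p k a b (fun _ => (0 : ℝ))
  have hx : maxLoad F - maxLoad (fun _ : Fin m => (0 : ℝ)) ∈ {x | ∃ D F : Fin m → ℝ,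
      (∀ i, 0 ≤ D i) ∧ Play p k D a b F ∧ x = maxLoad F - maxLoad D} :=
    ⟨_, F, fun i => le_refl 0, hF, rfl⟩
  have h0 : maxLoad (fun _ : Fin m => (0 : ℝ)) = 0 := ciSup_const
  have hF0 : (0 : ℝ) ≤ maxLoad F := by
    have i : Fin m := Classical.arbitrary _
    exact le_trans (play_le hp hF i) (le_maxLoad F i)
  have := le_csSup (bdd_deltaSet hp k a b) hx
  unfold deltaL
  rw [h0] at this
  linarith

lemma out_to_play {k : ℕ} {D F : Fin m → ℝ} {js : List ℕ} (h : Out p D js F) :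
    ∀ a b : ℕ, js = List.range' a (b + 1 - a) → b ≤ a + k → Play p k D a b F := by
  induction h with
  | nil D =>
      intro a b hjs hb
      have : b + 1 - a = 0 := (List.range'_eq_nil_iff).mp hjs.symm
      exact Play.nil D a b (by omega)
  | cons D j js i cont hcont hopt ih =>
      intro a b hjs hb
      rcases Nat.eq_zero_or_pos (b + 1 - a) with h0 | h0
      · rw [h0] at hjs; simp at hjs
      · have hab : a ≤ b := by omega
        have hlen : b + 1 - a = (b - a) + 1 := by omega
        rw [hlen, List.range'_succ] at hjs
        injection hjs with hj hjs'
        subst hj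
        have hmin : min (j + k) b - j = b - j := by omega
        have hlen2 : b + 1 - (j + 1) = b - j := by omega
        have hp1 : Play p k (bump p D i j) (j + 1) b (cont i) :=
          ih i (j + 1) b (by rw [hlen2, hjs']) (by omega)
        refine Play.cons D j b i (cont i) hab ⟨cont, ?_, hopt⟩ hp1
        rw [hmin, ← hjs']
        exact hcont

end Aux

/-- For jobs `1, …, n` with `k`-lookahead, for every `ℓ ∈ {1, …, n}`,
`ΔL([ℓ:n]) ≤ ΔL([ℓ+1:n]) + p_ℓ + ΔL(K_ℓ)`, where `K_ℓ = [ℓ+1 : min (ℓ+k) n]` is the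
lookahead set of job `ℓ` and `p_ℓ` its minimum processing time. -/
theorem deltaL_succ_add (m k n : ℕ) (hm : 0 < m) (p : Fin m → ℕ → ℝ)
    (hp : ∀ i j, 0 ≤ p i j) (ℓ : ℕ) (hℓ1 : 1 ≤ ℓ) (hℓ2 : ℓ ≤ n) :
    deltaL p k ℓ n ≤ deltaL p k (ℓ + 1) n + pmin p ℓ + deltaL p k (ℓ + 1) (min (ℓ + k) n) := by
  haveI : Nonempty (Fin m) := Fin.pos_iff_nonempty.mp hm
  set b' := min (ℓ + k) n with hb'
  have hΔ1 : 0 ≤ deltaL p k (ℓ + 1) n := deltaL_nonneg hp k (ℓ + 1) n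
  have hΔ2 : 0 ≤ deltaL p k (ℓ + 1) b' := deltaL_nonneg hp k (ℓ + 1) b'
  have hpmin : 0 ≤ pmin p ℓ := le_ciInf fun i => hp i ℓ
  apply Real.sSup_le
  · rintro x ⟨D, F, hD, hplay, rfl⟩
    cases hplay with
    | nil _ _ _ h => omega
    | cons _ _ _ i F hab hroot hplay' =>
      obtain ⟨cont, hcont, hopt⟩ := hroot
      obtain ⟨i0, hi0⟩ := Finite.exists_min (fun i' => p i' ℓ)
      have hpmin_eq : pmin p ℓ = p i0 ℓ :=
        le_antisymm (ciInf_le (Set.Finite.bddBelow (Set.finite_range _)) i0) (le_ciInf hi0)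
      -- part A: the play of the remaining jobs
      have hA : maxLoad F - maxLoad (bump p D i ℓ) ≤ deltaL p k (ℓ + 1) n :=
        le_csSup (bdd_deltaSet hp k (ℓ + 1) n)
          ⟨bump p D i ℓ, F, bump_nonneg hp hD i ℓ, hplay', rfl⟩
      -- part K: the lookahead play from machine i0
      have hplayK : Play p k (bump p D i0 ℓ) (ℓ + 1) b' (cont i0) := by
        refine out_to_play (hcont i0) (ℓ + 1) b' ?_ (by omega)
        congr 1
        omega
      have hK : maxLoad (cont i0) - maxLoad (bump p D i0 ℓ) ≤ deltaL p k (ℓ + 1) b' :=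
        le_csSup (bdd_deltaSet hp k (ℓ + 1) b')
          ⟨bump p D i0 ℓ, cont i0, bump_nonneg hp hD i0 ℓ, hplayK, rfl⟩
      have hKb : maxLoad (bump p D i0 ℓ) ≤ maxLoad D + p i0 ℓ := maxLoad_bump_le hp D i0 ℓ
      -- bound maxLoad (bump p D i ℓ)
      have h1 : maxLoad (bump p D i ℓ) ≤ maxLoad D + pmin p ℓ + deltaL p k (ℓ + 1) b' := by
        apply maxLoad_le
        intro i'
        by_cases hii : i' = i
        · subst hii
          have e1 : bump p D i' ℓ i' = D i' + p i' ℓ := by simp [bump]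
          have e2 : D i' + p i' ℓ ≤ cont i' i' := e1 ▸ out_le hp (hcont i') i'
          have e3 : cont i' i' ≤ cont i0 i0 := hopt i0
          have e4 : cont i0 i0 ≤ maxLoad (cont i0) := le_maxLoad _ i0
          rw [e1, hpmin_eq]
          linarith
        · have : bump p D i ℓ i' = D i' := by simp [bump, hii]
          rw [this]
          have := le_maxLoad D i'
          linarith
      linarith
  · linarith
end

section
/- Let m ≥ 2, n = m, let 0 < ε < 1/2 and let B ≥ m + 2. Consider the instance with processing times: p_{1,j} = 1 − ε for every job j; p_{j,j} = 1 for every job j ∈ {2,…,m}; p_{j+1,j} = m + 1 − j − (m + 2 − j)ε for every job j ∈ {1,…,m−1}; and p_{i,j} = B for all remaining pairs (i,j). Then every simple-minded equilibrium σ satisfies σ_j = j + 1 for j ∈ {1,…,m−1} and σ_m = 1, and has makespan m − (m+1)ε, while the schedule assigning each job j to machine j shows OPT ≤ 1. Consequently, for every c < m there is an instance on m machines whose simple-minded equilibrium has makespan greater than c·OPT (the sequential price of anarchy for simple-minded players is at least m). -/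
/-!
Sequential scheduling game on `m` unrelated machines with simple-minded players.
Here both machines and jobs are indexed by natural numbers: machines are `1, …, m`
and jobs are `1, …, n`; `p i j` is the processing time of job `j` on machine `i`.
-/

/-- `loadN p σ i ℓ`: load of machine `i` after the first `ℓ` jobs under schedule `σ`. -/
def loadN (p : ℕ → ℕ → ℝ) (σ : ℕ → ℕ) (i ℓ : ℕ) : ℝ :=
  ∑ j ∈ Finset.Icc 1 ℓ, if σ j = i then p i j else 0

/-- `μ` is a selection assigning to each job `j ∈ {1, …, n}` a machine in `{1, …, m}` on
which its processing time is minimal (so that `p (μ j) j = p_j`). -/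
def MinSelN (m n : ℕ) (p : ℕ → ℕ → ℝ) (μ : ℕ → ℕ) : Prop :=
  ∀ j ∈ Finset.Icc 1 n, μ j ∈ Finset.Icc 1 m ∧ ∀ i ∈ Finset.Icc 1 m, p (μ j) j ≤ p i j

/-- Anticipated cost, for a simple-minded job `j`, of choosing machine `i`:
the current load of machine `i`, plus `p i j`, plus the minimum processing times of
all later jobs that `j` assumes (via the selection `μ`) will choose machine `i`. -/
def smCostN (n : ℕ) (p : ℕ → ℕ → ℝ) (μ σ : ℕ → ℕ) (j i : ℕ) : ℝ :=
  loadN p σ i (j - 1) + p i j +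
    ∑ j' ∈ Finset.Icc (j + 1) n, if μ j' = i then p (μ j') j' else 0

/-- `σ` is a simple-minded equilibrium: every job `j ∈ {1, …, n}` chooses a machine in
`{1, …, m}` minimizing its anticipated cost. -/
def SMEqN (m n : ℕ) (p : ℕ → ℕ → ℝ) (μ σ : ℕ → ℕ) : Prop :=
  ∀ j ∈ Finset.Icc 1 n, σ j ∈ Finset.Icc 1 m ∧
    ∀ i ∈ Finset.Icc 1 m, smCostN n p μ σ j (σ j) ≤ smCostN n p μ σ j i

/-- Makespan of a schedule `τ` of jobs `1, …, n` on machines `1, …, m`. -/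
noncomputable def makespanN (m n : ℕ) (p : ℕ → ℕ → ℝ) (τ : ℕ → ℕ) : ℝ :=
  sSup {x | ∃ i ∈ Finset.Icc 1 m, x = loadN p τ i n}

/-- Optimal (minimum) makespan over all schedules of jobs `1, …, n` on machines
`1, …, m`. -/
noncomputable def OPTN (m n : ℕ) (p : ℕ → ℕ → ℝ) : ℝ :=
  sInf {x | ∃ τ : ℕ → ℕ, (∀ j ∈ Finset.Icc 1 n, τ j ∈ Finset.Icc 1 m) ∧
    x = makespanN m n p τ}

open Finset in
lemma loadN_succ (p : ℕ → ℕ → ℝ) (σ : ℕ → ℕ) (i ℓ : ℕ) :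
    loadN p σ i (ℓ + 1) = loadN p σ i ℓ + (if σ (ℓ + 1) = i then p i (ℓ + 1) else 0) := by
  unfold loadN
  rw [Finset.sum_Icc_succ_top (by omega : 1 ≤ ℓ + 1)]

lemma loadN_formula (p : ℕ → ℕ → ℝ) (σ : ℕ → ℕ) (ℓ : ℕ)
    (h : ∀ j ∈ Finset.Icc 1 ℓ, σ j = j + 1) (i : ℕ) :
    loadN p σ i ℓ = if 2 ≤ i ∧ i ≤ ℓ + 1 then p i (i - 1) else 0 := by
  induction ℓ with
  | zero => rw [if_neg (by omega)]; simp [loadN]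
  | succ ℓ ih =>
    rw [loadN_succ, ih (fun j hj => h j (by simp only [Finset.mem_Icc] at hj ⊢; omega)),
      h (ℓ + 1) (by simp only [Finset.mem_Icc]; omega)]
    by_cases hi : ℓ + 1 + 1 = i
    · subst hi
      rw [if_pos rfl, if_neg (by omega), if_pos (by omega)]
      norm_num
    · rw [if_neg hi, add_zero]
      by_cases h2 : 2 ≤ i ∧ i ≤ ℓ + 1
      · rw [if_pos h2, if_pos (by omega)]
      · rw [if_neg h2, if_neg (by omega)]

lemma ineq_one (m : ℕ) (ε : ℝ) (hε0 : 0 < ε) (hε : ε < 1 / 2) (j : ℕ)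
    (h1 : 1 ≤ j) (h2 : j + 1 ≤ m) :
    (1 : ℝ) - ε < (m : ℝ) + 1 - j - ((m : ℝ) + 2 - j) * ε := by
  have h2' : (j : ℝ) + 1 ≤ m := by exact_mod_cast h2
  nlinarith [mul_pos (show (0:ℝ) < (m : ℝ) - j by linarith)
    (show (0:ℝ) < 1/2 - ε by linarith)]

lemma muEq1 (m : ℕ) (hm : 2 ≤ m) (ε B : ℝ) (hε0 : 0 < ε) (hε : ε < 1 / 2)
    (hB : (m : ℝ) + 2 ≤ B) (p : ℕ → ℕ → ℝ)
    (hp1 : ∀ j ∈ Finset.Icc 1 m, p 1 j = 1 - ε)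
    (hp2 : ∀ j ∈ Finset.Icc 2 m, p j j = 1)
    (hp3 : ∀ j ∈ Finset.Icc 1 (m - 1),
      p (j + 1) j = (m : ℝ) + 1 - j - ((m : ℝ) + 2 - j) * ε)
    (hp4 : ∀ i ∈ Finset.Icc 1 m, ∀ j ∈ Finset.Icc 1 m,
      i ≠ 1 → i ≠ j → i ≠ j + 1 → p i j = B)
    (μ : ℕ → ℕ) (hμ : MinSelN m m p μ) :
    ∀ j ∈ Finset.Icc 1 m, μ j = 1 := by
  intro j hj
  obtain ⟨hmem, hmin⟩ := hμ j hj
  have h1 := hmin 1 (by simp only [Finset.mem_Icc]; omega)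
  rw [hp1 j hj] at h1
  simp only [Finset.mem_Icc] at hmem hj
  by_contra hne
  by_cases hij : μ j = j
  · rw [hij, hp2 j (by simp only [Finset.mem_Icc]; omega)] at h1
    linarith
  · by_cases hij1 : μ j = j + 1
    · have hjm : j + 1 ≤ m := by omega
      rw [hij1, hp3 j (by simp only [Finset.mem_Icc]; omega)] at h1
      have := ineq_one m ε hε0 hε j hj.1 hjm
      linarith
    · rw [hp4 (μ j) (by simp only [Finset.mem_Icc]; omega) j
        (by simp only [Finset.mem_Icc]; omega) hne hij hij1] at h1
      have : (0:ℝ) ≤ (m:ℝ) := Nat.cast_nonneg m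
      linarith

lemma tail_sum (m : ℕ) (ε : ℝ) (p : ℕ → ℕ → ℝ)
    (hp1 : ∀ j ∈ Finset.Icc 1 m, p 1 j = 1 - ε)
    (μ : ℕ → ℕ) (hμ1 : ∀ j ∈ Finset.Icc 1 m, μ j = 1)
    (j : ℕ) (hj1 : 1 ≤ j) (hjm : j ≤ m) (i : ℕ) :
    (∑ j' ∈ Finset.Icc (j + 1) m, if μ j' = i then p (μ j') j' else 0)
      = if i = 1 then ((m : ℝ) - j) * (1 - ε) else 0 := by
  by_cases hi : i = 1
  · subst hi
    rw [if_pos rfl]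
    have key : ∀ j' ∈ Finset.Icc (j+1) m,
        (if μ j' = 1 then p (μ j') j' else 0) = 1 - ε := by
      intro j' hj'
      simp only [Finset.mem_Icc] at hj'
      have hmem : j' ∈ Finset.Icc 1 m := by simp only [Finset.mem_Icc]; omega
      rw [hμ1 j' hmem, if_pos rfl, hp1 j' hmem]
    rw [Finset.sum_congr rfl key, Finset.sum_const, Nat.card_Icc,
      show m + 1 - (j + 1) = m - j from by omega, nsmul_eq_mul, Nat.cast_sub hjm]
  · rw [if_neg hi, Finset.sum_eq_zero]
    intro j' hj'
    simp only [Finset.mem_Icc] at hj'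
    have hmem : j' ∈ Finset.Icc 1 m := by simp only [Finset.mem_Icc]; omega
    rw [hμ1 j' hmem]
    exact if_neg (fun h => hi h.symm)

lemma cost_formula (m : ℕ) (ε : ℝ) (p : ℕ → ℕ → ℝ)
    (hp1 : ∀ j ∈ Finset.Icc 1 m, p 1 j = 1 - ε)
    (μ σ : ℕ → ℕ) (hμ1 : ∀ j ∈ Finset.Icc 1 m, μ j = 1)
    (j : ℕ) (hj1 : 1 ≤ j) (hjm : j ≤ m)
    (hprev : ∀ j' ∈ Finset.Icc 1 (j - 1), σ j' = j' + 1) (i : ℕ) :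
    smCostN m p μ σ j i =
      (if 2 ≤ i ∧ i ≤ j then p i (i - 1) else 0) + p i j +
        (if i = 1 then ((m : ℝ) - j) * (1 - ε) else 0) := by
  unfold smCostN
  rw [loadN_formula p σ (j - 1) hprev i, tail_sum m ε p hp1 μ hμ1 j hj1 hjm i,
    show j - 1 + 1 = j from by omega]

lemma cost_lt (m : ℕ) (hm : 2 ≤ m) (ε B : ℝ) (hε0 : 0 < ε) (hε : ε < 1 / 2)
    (hB : (m : ℝ) + 2 ≤ B) (p : ℕ → ℕ → ℝ)
    (hp1 : ∀ j ∈ Finset.Icc 1 m, p 1 j = 1 - ε)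
    (hp2 : ∀ j ∈ Finset.Icc 2 m, p j j = 1)
    (hp3 : ∀ j ∈ Finset.Icc 1 (m - 1),
      p (j + 1) j = (m : ℝ) + 1 - j - ((m : ℝ) + 2 - j) * ε)
    (hp4 : ∀ i ∈ Finset.Icc 1 m, ∀ j ∈ Finset.Icc 1 m,
      i ≠ 1 → i ≠ j → i ≠ j + 1 → p i j = B)
    (μ σ : ℕ → ℕ) (hμ1 : ∀ j ∈ Finset.Icc 1 m, μ j = 1)
    (j : ℕ) (hj1 : 1 ≤ j) (hjm1 : j + 1 ≤ m)
    (hprev : ∀ j' ∈ Finset.Icc 1 (j - 1), σ j' = j' + 1)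
    (i : ℕ) (hi : i ∈ Finset.Icc 1 m) (hne : i ≠ j + 1) :
    smCostN m p μ σ j (j + 1) < smCostN m p μ σ j i := by
  simp only [Finset.mem_Icc] at hi
  have hjm : j ≤ m := by omega
  have hjcast : (1:ℝ) ≤ (j:ℝ) := by exact_mod_cast hj1
  have hjmcast : (j:ℝ) + 1 ≤ (m:ℝ) := by exact_mod_cast hjm1
  rw [cost_formula m ε p hp1 μ σ hμ1 j hj1 hjm hprev,
    cost_formula m ε p hp1 μ σ hμ1 j hj1 hjm hprev]
  rw [if_neg (by omega : ¬(2 ≤ j + 1 ∧ j + 1 ≤ j)), if_neg (by omega : ¬(j + 1 = 1)),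
    hp3 j (by simp only [Finset.mem_Icc]; omega)]
  by_cases hi1 : i = 1
  · subst hi1
    rw [if_neg (by omega), if_pos rfl, hp1 j (by simp only [Finset.mem_Icc]; omega)]
    nlinarith [hε0]
  · rw [if_neg hi1]
    by_cases hij : i = j
    · subst hij
      have hj2 : 2 ≤ i := by omega
      rw [if_pos ⟨hj2, le_refl i⟩, hp2 i (by simp only [Finset.mem_Icc]; omega)]
      have hformula := hp3 (i - 1) (by simp only [Finset.mem_Icc]; omega)
      rw [show i - 1 + 1 = i from by omega] at hformula
      rw [hformula, Nat.cast_sub (by omega : 1 ≤ i)]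
      nlinarith [hε0, hε]
    · rw [hp4 i (by simp only [Finset.mem_Icc]; omega) j
        (by simp only [Finset.mem_Icc]; omega) hi1 hij hne]
      have hload : (0:ℝ) ≤ (if 2 ≤ i ∧ i ≤ j then p i (i - 1) else 0) := by
        by_cases h2 : 2 ≤ i ∧ i ≤ j
        · rw [if_pos h2]
          have hformula := hp3 (i - 1) (by simp only [Finset.mem_Icc]; omega)
          rw [show i - 1 + 1 = i from by omega] at hformula
          rw [hformula]
          have h1e := ineq_one m ε hε0 hε (i - 1) (by omega) (by omega)
          linarith
        · rw [if_neg h2]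
      nlinarith [mul_pos (show (0:ℝ) < (m:ℝ) + 2 - j by linarith) hε0, hload, hB]

lemma cost_lt_last (m : ℕ) (hm : 2 ≤ m) (ε B : ℝ) (hε0 : 0 < ε) (hε : ε < 1 / 2)
    (hB : (m : ℝ) + 2 ≤ B) (p : ℕ → ℕ → ℝ)
    (hp1 : ∀ j ∈ Finset.Icc 1 m, p 1 j = 1 - ε)
    (hp2 : ∀ j ∈ Finset.Icc 2 m, p j j = 1)
    (hp3 : ∀ j ∈ Finset.Icc 1 (m - 1),
      p (j + 1) j = (m : ℝ) + 1 - j - ((m : ℝ) + 2 - j) * ε)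
    (hp4 : ∀ i ∈ Finset.Icc 1 m, ∀ j ∈ Finset.Icc 1 m,
      i ≠ 1 → i ≠ j → i ≠ j + 1 → p i j = B)
    (μ σ : ℕ → ℕ) (hμ1 : ∀ j ∈ Finset.Icc 1 m, μ j = 1)
    (hprev : ∀ j' ∈ Finset.Icc 1 (m - 1), σ j' = j' + 1)
    (i : ℕ) (hi : i ∈ Finset.Icc 1 m) (hne : i ≠ 1) :
    smCostN m p μ σ m 1 < smCostN m p μ σ m i := by
  simp only [Finset.mem_Icc] at hi
  rw [cost_formula m ε p hp1 μ σ hμ1 m (by omega) le_rfl hprev,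
    cost_formula m ε p hp1 μ σ hμ1 m (by omega) le_rfl hprev]
  rw [if_neg (by omega : ¬(2 ≤ 1 ∧ 1 ≤ m)), if_pos rfl, if_neg hne,
    hp1 m (by simp only [Finset.mem_Icc]; omega),
    if_pos (show 2 ≤ i ∧ i ≤ m by omega)]
  have hformula := hp3 (i - 1) (by simp only [Finset.mem_Icc]; omega)
  rw [show i - 1 + 1 = i from by omega] at hformula
  rw [hformula]
  have h1e := ineq_one m ε hε0 hε (i - 1) (by omega) (by omega)
  by_cases him : i = m
  · subst him
    rw [hp2 i (by simp only [Finset.mem_Icc]; omega)]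
    nlinarith [h1e, hε0]
  · rw [hp4 i (by simp only [Finset.mem_Icc]; omega) m
      (by simp only [Finset.mem_Icc]; omega) hne him (by omega : i ≠ m + 1)]
    have hm' : (2:ℝ) ≤ (m:ℝ) := by exact_mod_cast hm
    nlinarith [h1e, hB, hε0]

lemma sigma_forced (m : ℕ) (hm : 2 ≤ m) (ε B : ℝ) (hε0 : 0 < ε) (hε : ε < 1 / 2)
    (hB : (m : ℝ) + 2 ≤ B) (p : ℕ → ℕ → ℝ)
    (hp1 : ∀ j ∈ Finset.Icc 1 m, p 1 j = 1 - ε)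
    (hp2 : ∀ j ∈ Finset.Icc 2 m, p j j = 1)
    (hp3 : ∀ j ∈ Finset.Icc 1 (m - 1),
      p (j + 1) j = (m : ℝ) + 1 - j - ((m : ℝ) + 2 - j) * ε)
    (hp4 : ∀ i ∈ Finset.Icc 1 m, ∀ j ∈ Finset.Icc 1 m,
      i ≠ 1 → i ≠ j → i ≠ j + 1 → p i j = B)
    (μ σ : ℕ → ℕ) (hμ1 : ∀ j ∈ Finset.Icc 1 m, μ j = 1)
    (hσ : SMEqN m m p μ σ) :
    (∀ j ∈ Finset.Icc 1 (m - 1), σ j = j + 1) ∧ σ m = 1 := by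
  have H : ∀ j, j ∈ Finset.Icc 1 (m - 1) → σ j = j + 1 := by
    intro j
    induction j using Nat.strong_induction_on with
    | _ j ih =>
      intro hj
      simp only [Finset.mem_Icc] at hj
      have hprev : ∀ j' ∈ Finset.Icc 1 (j - 1), σ j' = j' + 1 := by
        intro j' hj'
        simp only [Finset.mem_Icc] at hj'
        exact ih j' (by omega) (by simp only [Finset.mem_Icc]; omega)
      obtain ⟨hmem, hmin⟩ := hσ j (by simp only [Finset.mem_Icc]; omega)
      by_contra hne
      have hlt := cost_lt m hm ε B hε0 hε hB p hp1 hp2 hp3 hp4 μ σ hμ1 j hj.1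
        (by omega) hprev (σ j) hmem hne
      have hle := hmin (j + 1) (by simp only [Finset.mem_Icc]; omega)
      linarith
  refine ⟨H, ?_⟩
  obtain ⟨hmem, hmin⟩ := hσ m (by simp only [Finset.mem_Icc]; omega)
  by_contra hne
  have hlt := cost_lt_last m hm ε B hε0 hε hB p hp1 hp2 hp3 hp4 μ σ hμ1 H
    (σ m) hmem hne
  have hle := hmin 1 (by simp only [Finset.mem_Icc]; omega)
  linarith

lemma bddAbove_machines (s : Finset ℕ) (f : ℕ → ℝ) :
    BddAbove {x | ∃ i ∈ s, x = f i} := by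
  have hset : {x | ∃ i ∈ s, x = f i} = ↑(s.image f) := by
    ext x
    simp [eq_comm]
  rw [hset]
  exact (s.image f).finite_toSet.bddAbove

lemma csSup_machines (s : Finset ℕ) (f : ℕ → ℝ) (i0 : ℕ) (h0 : i0 ∈ s)
    (hmax : ∀ i ∈ s, f i ≤ f i0) :
    sSup {x | ∃ i ∈ s, x = f i} = f i0 := by
  apply le_antisymm
  · apply csSup_le
    · exact ⟨f i0, i0, h0, rfl⟩
    · rintro x ⟨i, hi, rfl⟩
      exact hmax i hi
  · exact le_csSup (bddAbove_machines s f) ⟨i0, h0, rfl⟩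

lemma mainA (m : ℕ) (hm : 2 ≤ m) (ε B : ℝ)
    (hε0 : 0 < ε) (hε : ε < 1 / 2) (hB : (m : ℝ) + 2 ≤ B)
    (p : ℕ → ℕ → ℝ)
    (hp1 : ∀ j ∈ Finset.Icc 1 m, p 1 j = 1 - ε)
    (hp2 : ∀ j ∈ Finset.Icc 2 m, p j j = 1)
    (hp3 : ∀ j ∈ Finset.Icc 1 (m - 1),
      p (j + 1) j = (m : ℝ) + 1 - j - ((m : ℝ) + 2 - j) * ε)
    (hp4 : ∀ i ∈ Finset.Icc 1 m, ∀ j ∈ Finset.Icc 1 m,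
      i ≠ 1 → i ≠ j → i ≠ j + 1 → p i j = B)
    (μ σ : ℕ → ℕ) (hμ : MinSelN m m p μ) (hσ : SMEqN m m p μ σ) :
    (∀ j ∈ Finset.Icc 1 (m - 1), σ j = j + 1) ∧ σ m = 1 ∧
    makespanN m m p σ = (m : ℝ) - ((m : ℝ) + 1) * ε ∧
    OPTN m m p ≤ 1 ∧ 0 ≤ OPTN m m p := by
  have hμ1 := muEq1 m hm ε B hε0 hε hB p hp1 hp2 hp3 hp4 μ hμ
  obtain ⟨h1, h2⟩ := sigma_forced m hm ε B hε0 hε hB p hp1 hp2 hp3 hp4 μ σ hμ1 hσ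
  have hmcast : (2:ℝ) ≤ (m:ℝ) := by exact_mod_cast hm
  have hload : ∀ i, loadN p σ i m =
      if i = 1 then p 1 m else if 2 ≤ i ∧ i ≤ m then p i (i - 1) else 0 := by
    intro i
    have hsucc := loadN_succ p σ i (m - 1)
    rw [show m - 1 + 1 = m from by omega] at hsucc
    rw [hsucc, loadN_formula p σ (m - 1) h1 i, h2, show m - 1 + 1 = m from by omega]
    by_cases hi1 : i = 1
    · subst hi1
      rw [if_neg (show ¬(2 ≤ 1 ∧ 1 ≤ m) from by omega)]
      norm_num
    · rw [if_neg (show ¬((1:ℕ) = i) from fun h => hi1 h.symm), if_neg hi1, add_zero]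
  have hval2 : p 2 1 = (m : ℝ) - ((m : ℝ) + 1) * ε := by
    have := hp3 1 (by simp only [Finset.mem_Icc]; omega)
    rw [this]
    push_cast
    ring
  have hmax : ∀ i ∈ Finset.Icc 1 m, loadN p σ i m ≤ loadN p σ 2 m := by
    intro i hi
    simp only [Finset.mem_Icc] at hi
    rw [hload i, hload 2, if_neg (by omega : ¬(2 = 1)),
      if_pos (show 2 ≤ 2 ∧ 2 ≤ m by omega)]
    rw [show (2:ℕ) - 1 = 1 from rfl, hval2]
    by_cases hi1 : i = 1
    · subst hi1
      rw [if_pos rfl, hp1 m (by simp only [Finset.mem_Icc]; omega)]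
      nlinarith [mul_lt_mul_of_pos_right hε (show (0:ℝ) < (m:ℝ) by linarith)]
    · rw [if_neg hi1, if_pos (show 2 ≤ i ∧ i ≤ m by omega)]
      have hformula := hp3 (i - 1) (by simp only [Finset.mem_Icc]; omega)
      rw [show i - 1 + 1 = i from by omega] at hformula
      rw [hformula]
      have hc1 : (1:ℝ) ≤ ((i - 1 : ℕ) : ℝ) := by exact_mod_cast (by omega : 1 ≤ i - 1)
      have hc2 : ((i - 1 : ℕ) : ℝ) ≤ (m:ℝ) - 1 := by
        have : i - 1 ≤ m - 1 := by omega
        have h' : ((i - 1 : ℕ) : ℝ) ≤ ((m - 1 : ℕ) : ℝ) := by exact_mod_cast this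
        rwa [Nat.cast_sub (by omega : 1 ≤ m), Nat.cast_one] at h'
      nlinarith [mul_nonneg (show (0:ℝ) ≤ ((i - 1 : ℕ):ℝ) - 1 by linarith)
        (show (0:ℝ) ≤ 1 - ε by linarith)]
  have hmk : makespanN m m p σ = (m : ℝ) - ((m : ℝ) + 1) * ε := by
    unfold makespanN
    have hsup : sSup {x | ∃ i ∈ Finset.Icc 1 m, x = loadN p σ i m} = loadN p σ 2 m :=
      csSup_machines (Finset.Icc 1 m) (fun i => loadN p σ i m) 2
        (by simp only [Finset.mem_Icc]; omega) hmax
    rw [hsup, hload 2, if_neg (by omega : ¬(2 = 1)),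
      if_pos (show 2 ≤ 2 ∧ 2 ≤ m by omega), show (2:ℕ) - 1 = 1 from rfl, hval2]
  have hlb : ∀ x ∈ {x | ∃ τ : ℕ → ℕ, (∀ j ∈ Finset.Icc 1 m, τ j ∈ Finset.Icc 1 m) ∧
      x = makespanN m m p τ}, (0:ℝ) ≤ x := by
    rintro x ⟨τ, hτ, rfl⟩
    have h01 : (0:ℝ) ≤ loadN p τ 1 m := by
      unfold loadN
      apply Finset.sum_nonneg
      intro j hj
      by_cases h : τ j = 1
      · rw [if_pos h, hp1 j hj]
        linarith
      · rw [if_neg h]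
    have hle : loadN p τ 1 m ≤ makespanN m m p τ := by
      unfold makespanN
      exact le_csSup (bddAbove_machines (Finset.Icc 1 m) (fun i => loadN p τ i m))
        ⟨1, by simp only [Finset.mem_Icc]; omega, rfl⟩
    linarith
  have hid : makespanN m m p (fun j => j) = 1 := by
    have hloadid : ∀ i ∈ Finset.Icc 1 m, loadN p (fun j => j) i m = p i i := by
      intro i hi
      unfold loadN
      rw [Finset.sum_eq_single i (fun a _ ha => if_neg ha) (fun h => absurd hi h)]
      exact if_pos rfl
    unfold makespanN
    have hsup : sSup {x | ∃ i ∈ Finset.Icc 1 m, x = loadN p (fun j => j) i m}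
        = loadN p (fun j => j) 2 m := by
      apply csSup_machines (Finset.Icc 1 m) (fun i => loadN p (fun j => j) i m) 2
        (by simp only [Finset.mem_Icc]; omega)
      intro i hi
      rw [hloadid i hi, hloadid 2 (by simp only [Finset.mem_Icc]; omega),
        hp2 2 (by simp only [Finset.mem_Icc]; omega)]
      simp only [Finset.mem_Icc] at hi
      by_cases hi1 : i = 1
      · subst hi1
        rw [hp1 1 (by simp only [Finset.mem_Icc]; omega)]
        linarith
      · rw [hp2 i (by simp only [Finset.mem_Icc]; omega)]
    rw [hsup, hloadid 2 (by simp only [Finset.mem_Icc]; omega),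
      hp2 2 (by simp only [Finset.mem_Icc]; omega)]
  have hopt_le : OPTN m m p ≤ 1 := by
    unfold OPTN
    have := csInf_le ⟨0, fun x hx => hlb x hx⟩
      (show makespanN m m p (fun j => j) ∈ _ from ⟨fun j => j, fun j hj => hj, rfl⟩)
    rwa [hid] at this
  have hopt_ge : 0 ≤ OPTN m m p := by
    unfold OPTN
    exact le_csInf ⟨makespanN m m p (fun _ => 1),
      ⟨fun _ => 1, fun j hj => by simp only [Finset.mem_Icc]; omega, rfl⟩⟩ hlb
  exact ⟨h1, h2, hmk, hopt_le, hopt_ge⟩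

def sigma0 (m : ℕ) : ℕ → ℕ := fun j => if j = m then 1 else j + 1

lemma sigma0_SMEq (m : ℕ) (hm : 2 ≤ m) (ε B : ℝ) (hε0 : 0 < ε) (hε : ε < 1 / 2)
    (hB : (m : ℝ) + 2 ≤ B) (p : ℕ → ℕ → ℝ)
    (hp1 : ∀ j ∈ Finset.Icc 1 m, p 1 j = 1 - ε)
    (hp2 : ∀ j ∈ Finset.Icc 2 m, p j j = 1)
    (hp3 : ∀ j ∈ Finset.Icc 1 (m - 1),
      p (j + 1) j = (m : ℝ) + 1 - j - ((m : ℝ) + 2 - j) * ε)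
    (hp4 : ∀ i ∈ Finset.Icc 1 m, ∀ j ∈ Finset.Icc 1 m,
      i ≠ 1 → i ≠ j → i ≠ j + 1 → p i j = B)
    (μ : ℕ → ℕ) (hμ1 : ∀ j ∈ Finset.Icc 1 m, μ j = 1) :
    SMEqN m m p μ (sigma0 m) := by
  intro j hj
  simp only [Finset.mem_Icc] at hj
  by_cases hjm : j = m
  · subst hjm
    have hσ0 : sigma0 j j = 1 := by simp [sigma0]
    have hprev : ∀ j' ∈ Finset.Icc 1 (j - 1), sigma0 j j' = j' + 1 := by
      intro j' hj'
      simp only [Finset.mem_Icc] at hj'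
      simp only [sigma0]
      rw [if_neg (by omega)]
    refine ⟨by rw [hσ0]; simp only [Finset.mem_Icc]; omega, ?_⟩
    intro i hi
    rw [hσ0]
    by_cases hi1 : i = 1
    · subst hi1; exact le_refl _
    · exact le_of_lt (cost_lt_last j hm ε B hε0 hε hB p hp1 hp2 hp3 hp4 μ
        (sigma0 j) hμ1 hprev i hi hi1)
  · have hσ0 : sigma0 m j = j + 1 := by simp only [sigma0]; rw [if_neg hjm]
    have hprev : ∀ j' ∈ Finset.Icc 1 (j - 1), sigma0 m j' = j' + 1 := by
      intro j' hj'
      simp only [Finset.mem_Icc] at hj'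
      simp only [sigma0]
      rw [if_neg (by omega)]
    refine ⟨by rw [hσ0]; simp only [Finset.mem_Icc]; omega, ?_⟩
    intro i hi
    rw [hσ0]
    by_cases hij : i = j + 1
    · subst hij; exact le_refl _
    · exact le_of_lt (cost_lt m hm ε B hε0 hε hB p hp1 hp2 hp3 hp4 μ
        (sigma0 m) hμ1 j hj.1 (by omega) hprev i hi hij)

def qdef (m : ℕ) (e : ℝ) : ℕ → ℕ → ℝ := fun i j =>
  if i = 1 then 1 - e
  else if i = j then 1
  else if i = j + 1 ∧ j ≤ m - 1 then (m : ℝ) + 1 - j - ((m : ℝ) + 2 - j) * e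
  else (m : ℝ) + 2

lemma qdef_1 (m : ℕ) (e : ℝ) : ∀ j ∈ Finset.Icc 1 m, qdef m e 1 j = 1 - e := by
  intro j _; simp [qdef]

lemma qdef_2 (m : ℕ) (e : ℝ) : ∀ j ∈ Finset.Icc 2 m, qdef m e j j = 1 := by
  intro j hj; simp only [Finset.mem_Icc] at hj
  simp only [qdef]
  rw [if_neg (by omega : ¬ j = 1), if_pos trivial]

lemma qdef_3 (m : ℕ) (e : ℝ) : ∀ j ∈ Finset.Icc 1 (m - 1),
    qdef m e (j + 1) j = (m : ℝ) + 1 - j - ((m : ℝ) + 2 - j) * e := by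
  intro j hj; simp only [Finset.mem_Icc] at hj
  simp only [qdef]
  rw [if_neg (by omega : ¬ j + 1 = 1), if_neg (by omega : ¬ j + 1 = j),
    if_pos ⟨trivial, by omega⟩]

lemma qdef_4 (m : ℕ) (e : ℝ) : ∀ i ∈ Finset.Icc 1 m, ∀ j ∈ Finset.Icc 1 m,
    i ≠ 1 → i ≠ j → i ≠ j + 1 → qdef m e i j = (m : ℝ) + 2 := by
  intro i _ j _ hi1 hij hij1
  simp only [qdef]
  rw [if_neg hi1, if_neg hij, if_neg (fun h => hij1 h.1)]

lemma qdef_nn (m : ℕ) (hm : 2 ≤ m) (e : ℝ) (he0 : 0 < e) (heh : e < 1 / 2) :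
    ∀ i j, 0 ≤ qdef m e i j := by
  intro i j
  have hm' : (2:ℝ) ≤ (m:ℝ) := by exact_mod_cast hm
  simp only [qdef]
  split_ifs with ha hb hc'
  · linarith
  · norm_num
  · obtain ⟨-, hj⟩ := hc'
    have hjm : (j:ℝ) + 1 ≤ (m:ℝ) := by exact_mod_cast (by omega : j + 1 ≤ m)
    nlinarith [mul_nonneg (show (0:ℝ) ≤ (m:ℝ) + 2 - j by linarith)
      (show (0:ℝ) ≤ 1/2 - e by linarith)]
  · linarith

lemma qdef_sel (m : ℕ) (hm : 2 ≤ m) (e : ℝ) (he0 : 0 < e) (heh : e < 1 / 2) :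
    MinSelN m m (qdef m e) (fun _ => 1) := by
  intro j hj
  simp only [Finset.mem_Icc] at hj
  have hm' : (2:ℝ) ≤ (m:ℝ) := by exact_mod_cast hm
  refine ⟨by simp only [Finset.mem_Icc]; omega, ?_⟩
  intro i hi
  simp only [Finset.mem_Icc] at hi
  show qdef m e 1 j ≤ qdef m e i j
  simp only [qdef]
  rw [if_pos trivial]
  split_ifs with ha hb hc'
  · exact le_refl _
  · linarith
  · obtain ⟨-, hjle⟩ := hc'
    have hjm : (j:ℝ) + 1 ≤ (m:ℝ) := by exact_mod_cast (by omega : j + 1 ≤ m)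
    nlinarith [mul_nonneg (show (0:ℝ) ≤ (m:ℝ) + 1 - j by linarith)
      (show (0:ℝ) ≤ 1/2 - e by linarith)]
  · linarith



/-- Let `m ≥ 2`, `n = m`, `0 < ε < 1/2` and `B ≥ m + 2`, and consider
the instance with `p 1 j = 1 − ε` for all jobs `j`, `p j j = 1` for `j ∈ {2, …, m}`,
`p (j+1) j = m + 1 − j − (m + 2 − j)ε` for `j ∈ {1, …, m−1}`, and `p i j = B` for all
remaining pairs.  Every simple-minded equilibrium `σ` sends job `j` to machine `j + 1`
for `j ∈ {1, …, m−1}` and job `m` to machine `1`, and has makespan `m − (m+1)ε`, while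
the schedule assigning each job `j` to machine `j` shows `OPT ≤ 1`.  Consequently, for
every `c < m` there is an instance on `m` machines with a simple-minded equilibrium of
makespan greater than `c · OPT`: the sequential price of anarchy for simple-minded
players is at least `m`. -/

theorem spoa_simpleMinded_ge (m : ℕ) (hm : 2 ≤ m) (ε B : ℝ)
    (hε0 : 0 < ε) (hε : ε < 1 / 2) (hB : (m : ℝ) + 2 ≤ B)
    (p : ℕ → ℕ → ℝ)
    (hp1 : ∀ j ∈ Finset.Icc 1 m, p 1 j = 1 - ε)
    (hp2 : ∀ j ∈ Finset.Icc 2 m, p j j = 1)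
    (hp3 : ∀ j ∈ Finset.Icc 1 (m - 1),
      p (j + 1) j = (m : ℝ) + 1 - j - ((m : ℝ) + 2 - j) * ε)
    (hp4 : ∀ i ∈ Finset.Icc 1 m, ∀ j ∈ Finset.Icc 1 m,
      i ≠ 1 → i ≠ j → i ≠ j + 1 → p i j = B)
    (μ σ : ℕ → ℕ) (hμ : MinSelN m m p μ) (hσ : SMEqN m m p μ σ) :
    (∀ j ∈ Finset.Icc 1 (m - 1), σ j = j + 1) ∧ σ m = 1 ∧
    makespanN m m p σ = (m : ℝ) - ((m : ℝ) + 1) * ε ∧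
    OPTN m m p ≤ 1 ∧
    (∀ c : ℝ, c < (m : ℝ) →
      ∃ (n' : ℕ) (q : ℕ → ℕ → ℝ) (μ' σ' : ℕ → ℕ),
        (∀ i j, 0 ≤ q i j) ∧ MinSelN m n' q μ' ∧ SMEqN m n' q μ' σ' ∧
        c * OPTN m n' q < makespanN m n' q σ') := by
  obtain ⟨h1, h2, hmk, hopt, hopt0⟩ :=
    mainA m hm ε B hε0 hε hB p hp1 hp2 hp3 hp4 μ σ hμ hσ
  refine ⟨h1, h2, hmk, hopt, ?_⟩
  intro c hc
  have hm' : (2:ℝ) ≤ (m:ℝ) := by exact_mod_cast hm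
  obtain ⟨e, he0, heh, hkey⟩ : ∃ e : ℝ, 0 < e ∧ e < 1/2 ∧ c < (m:ℝ) - ((m:ℝ) + 1) * e := by
    refine ⟨(1/2) * min (1/2) (((m:ℝ) - c) / ((m:ℝ) + 1)), ?_, ?_, ?_⟩
    · exact mul_pos (by norm_num) (lt_min (by norm_num) (div_pos (by linarith) (by linarith)))
    · have h1 : min (1/2) (((m:ℝ) - c) / ((m:ℝ) + 1)) ≤ 1/2 := min_le_left _ _
      linarith
    · have hδle : min (1/2) (((m:ℝ) - c) / ((m:ℝ) + 1)) ≤ ((m:ℝ) - c) / ((m:ℝ) + 1) :=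
        min_le_right _ _
      have hmul : ((m:ℝ) + 1) * min (1/2) (((m:ℝ) - c) / ((m:ℝ) + 1)) ≤ (m:ℝ) - c := by
        calc ((m:ℝ) + 1) * min (1/2) (((m:ℝ) - c) / ((m:ℝ) + 1))
            ≤ ((m:ℝ) + 1) * (((m:ℝ) - c) / ((m:ℝ) + 1)) :=
              mul_le_mul_of_nonneg_left hδle (by linarith)
          _ = (m:ℝ) - c := mul_div_cancel₀ _ (by linarith)
      nlinarith [hmul, hc]
  have hq1 := qdef_1 m e
  have hq2 := qdef_2 m e
  have hq3 := qdef_3 m e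
  have hq4 := qdef_4 m e
  have hqnn := qdef_nn m hm e he0 heh
  have hμ'sel := qdef_sel m hm e he0 heh
  have hμ'1 : ∀ j ∈ Finset.Icc 1 m, (fun _ : ℕ => 1) j = 1 := fun j _ => rfl
  have hsme : SMEqN m m (qdef m e) (fun _ => 1) (sigma0 m) :=
    sigma0_SMEq m hm e ((m:ℝ) + 2) he0 heh le_rfl (qdef m e) hq1 hq2 hq3 hq4
      (fun _ => 1) hμ'1
  obtain ⟨-, -, hmk', hopt', hopt0'⟩ :=
    mainA m hm e ((m:ℝ) + 2) he0 heh le_rfl (qdef m e) hq1 hq2 hq3 hq4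
      (fun _ => 1) (sigma0 m) hμ'sel hsme
  refine ⟨m, qdef m e, fun _ => 1, sigma0 m, hqnn, hμ'sel, hsme, ?_⟩
  rw [hmk']
  rcases le_or_gt c 0 with hc0 | hc0
  · have hnn : c * OPTN m m (qdef m e) ≤ 0 := by
      nlinarith [mul_nonneg (neg_nonneg.mpr hc0) hopt0']
    nlinarith [heh, he0, hm']
  · calc c * OPTN m m (qdef m e) ≤ c * 1 := mul_le_mul_of_nonneg_left hopt' hc0.le
      _ = c := mul_one c
      _ < _ := hkey
end

section
/- Let D₁, D₂ ≥ 0 be real numbers, let s < s' be integers, and let a_j, b_j ≥ 0 for j ∈ {s+1,…,s'} be real numbers. Assume: (i) D₁ + a_{s+1} ≤ D₂ + b_{s+1}; and (ii) for every n' with s+1 ≤ n' ≤ s'−1, both D₁ + a_{n'} + a_{n'+1} ≤ D₂ + Σ_{j=s+1}^{n'−1} b_j + b_{n'+1} and D₂ + Σ_{j=s+1}^{n'} b_j ≤ D₁ + a_{n'} + a_{n'+1}. Then max(D₁ + a_{s'}, D₂ + Σ_{j=s+1}^{s'−1} b_j) ≤ max(D₁, D₂) + Σ_{j=s+1}^{s'}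 min(a_j, b_j). -/
private lemma sum_Icc_top (a b : ℤ) (h : a ≤ b + 1) (f : ℤ → ℝ) :
    ∑ i ∈ Finset.Icc a (b+1), f i = (∑ i ∈ Finset.Icc a b, f i) + f (b+1) := by
  have : Finset.Icc a (b+1) = insert (b+1) (Finset.Icc a b) := by
    ext x; simp [Finset.mem_Icc]; omega
  rw [this, Finset.sum_insert (by simp), add_comm]

private lemma aux (D₁ D₂ : ℝ) (hD₁ : 0 ≤ D₁) (hD₂ : 0 ≤ D₂)
    (s : ℤ) (a b : ℤ → ℝ)
    (h1 : D₁ + a (s + 1) ≤ D₂ + b (s + 1)) :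
    ∀ s', s + 1 ≤ s' →
    (∀ j ∈ Finset.Icc (s + 1) s', 0 ≤ a j) →
    (∀ j ∈ Finset.Icc (s + 1) s', 0 ≤ b j) →
    (∀ n', s + 1 ≤ n' → n' ≤ s' - 1 →
      D₁ + a n' + a (n' + 1) ≤
          D₂ + (∑ j ∈ Finset.Icc (s + 1) (n' - 1), b j) + b (n' + 1) ∧
        D₂ + (∑ j ∈ Finset.Icc (s + 1) n', b j) ≤ D₁ + a n' + a (n' + 1)) →
    max (D₁ + a s') (D₂ + ∑ j ∈ Finset.Icc (s + 1) (s' - 1), b j) ≤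
      max D₁ D₂ + ∑ j ∈ Finset.Icc (s + 1) s', min (a j) (b j) := by
  refine Int.le_induction ?_ ?_
  ·
    intro ha hb _
    have he : Finset.Icc (s + 1) (s + 1 - 1) = ∅ := by
      apply Finset.Icc_eq_empty; omega
    have h2 : Finset.Icc (s + 1) (s + 1) = {s + 1} := by simp
    rw [he, h2]
    simp only [Finset.sum_empty, Finset.sum_singleton, add_zero]
    have hb1 : 0 ≤ b (s + 1) := hb _ (by rw [h2]; simp)
    have ha1 : 0 ≤ a (s + 1) := ha _ (by rw [h2]; simp)
    rcases le_total (a (s+1)) (b (s+1)) with h | h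
    · rw [min_eq_left h]
      exact max_le (by nlinarith [le_max_left D₁ D₂])
        (by nlinarith [le_max_right D₁ D₂])
    · rw [min_eq_right h]
      apply max_le
      · calc D₁ + a (s+1) ≤ D₂ + b (s+1) := h1
          _ ≤ max D₁ D₂ + b (s+1) := by simp [le_max_right]
      · nlinarith [le_max_right D₁ D₂]
  · intro s' hs' IH ha hb h2
    have hsub : ∀ j ∈ Finset.Icc (s + 1) s', j ∈ Finset.Icc (s + 1) (s' + 1) := by
      intro j hj; simp [Finset.mem_Icc] at *; omega
    have IH' := IH (fun j hj => ha j (hsub j hj)) (fun j hj => hb j (hsub j hj))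
      (fun n' h h' => h2 n' h (by omega))
    have hAB := h2 s' (by omega) (by omega)
    obtain ⟨hA, hB⟩ := hAB
    have has' : 0 ≤ a s' := ha s' (by simp [Finset.mem_Icc]; omega)
    have hIH1 : D₁ + a s' ≤ max D₁ D₂ + ∑ j ∈ Finset.Icc (s + 1) s', min (a j) (b j) :=
      le_trans (le_max_left _ _) IH'
    have hIH2 : D₂ + ∑ j ∈ Finset.Icc (s + 1) (s' - 1), b j ≤
        max D₁ D₂ + ∑ j ∈ Finset.Icc (s + 1) s', min (a j) (b j) :=
      le_trans (le_max_right _ _) IH'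
    have hT : 0 ≤ ∑ j ∈ Finset.Icc (s + 1) s', min (a j) (b j) := by
      apply Finset.sum_nonneg
      intro j hj
      exact le_min (ha j (hsub j hj)) (hb j (hsub j hj))
    have hsum : ∑ j ∈ Finset.Icc (s + 1) (s' + 1), min (a j) (b j) =
        (∑ j ∈ Finset.Icc (s + 1) s', min (a j) (b j)) + min (a (s'+1)) (b (s'+1)) :=
      sum_Icc_top _ _ (by omega) _
    have hgoal1 : Finset.Icc (s + 1) (s' + 1 - 1) = Finset.Icc (s + 1) s' := by norm_num
    rw [hgoal1, hsum]
    set T := ∑ j ∈ Finset.Icc (s + 1) s', min (a j) (b j) with hTdef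
    set M := max D₁ D₂ with hM
    have hD₁M : D₁ ≤ M := le_max_left _ _
    have hD₂M : D₂ ≤ M := le_max_right _ _
    rcases le_total (a (s'+1)) (b (s'+1)) with h | h
    · rw [min_eq_left h]
      apply max_le
      · linarith
      · linarith
    · rw [min_eq_right h]
      apply max_le
      · linarith
      · linarith

/-- the induction step, Claim 1, in the proof that 1-lookahead
equilibria on two unrelated machines have makespan at most the total minimum
processing time.  `D₁, D₂ ≥ 0` are the current loads of machines 1 and 2, and for
`j ∈ {s+1, …, s'}`, `a j ≥ 0` and `b j ≥ 0` are the processing times of job `j` on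
machines 1 and 2.  Hypotheses (i) and (ii) encode the 1-lookahead equilibrium behavior
of jobs `s+1, …, s'` (jobs `s+1, …, s'−1` choose machine 2 and job `s'` chooses
machine 1).  The conclusion bounds the increase of the maximum load by the total
minimum processing time of the jobs involved. -/
theorem claim_induction_step (D₁ D₂ : ℝ) (hD₁ : 0 ≤ D₁) (hD₂ : 0 ≤ D₂)
    (s s' : ℤ) (hss : s < s') (a b : ℤ → ℝ)
    (ha : ∀ j ∈ Finset.Icc (s + 1) s', 0 ≤ a j)
    (hb : ∀ j ∈ Finset.Icc (s + 1) s', 0 ≤ b j)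
    (h1 : D₁ + a (s + 1) ≤ D₂ + b (s + 1))
    (h2 : ∀ n', s + 1 ≤ n' → n' ≤ s' - 1 →
      D₁ + a n' + a (n' + 1) ≤
          D₂ + (∑ j ∈ Finset.Icc (s + 1) (n' - 1), b j) + b (n' + 1) ∧
        D₂ + (∑ j ∈ Finset.Icc (s + 1) n', b j) ≤ D₁ + a n' + a (n' + 1)) :
    max (D₁ + a s') (D₂ + ∑ j ∈ Finset.Icc (s + 1) (s' - 1), b j) ≤
      max D₁ D₂ + ∑ j ∈ Finset.Icc (s + 1) s', min (a j) (b j) := by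
  exact aux D₁ D₂ hD₁ hD₂ s a b h1 s' (by omega) ha hb h2
end

section
/- Let D₁, D₂ ≥ 0 be real numbers, let s be an integer, let a_j, b_j ≥ 0 be real numbers, and let n' ≥ s+1 be an integer. Define Φ(t) := max(D₁ + a_{t+1}, D₂ + Σ_{j=s+1}^{t} b_j). If D₁ + a_{n'} + a_{n'+1} ≤ D₂ + Σ_{j=s+1}^{n'−1} b_j + b_{n'+1} and D₂ + Σ_{j=s+1}^{n'} b_j ≤ D₁ + a_{n'} + a_{n'+1}, then Φ(n') ≤ max(D₁ + a_{n'}, D₂ + Σ_{j=s+1}^{n'−1} b_j) + min(a_{n'+1}, b_{n'+1}), i.e., Φ(n') ≤ Φ(n'−1) + min(a_{n'+1}, b_{n'+1}). -/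
/-- a key inequality in the proof that 1-lookahead equilibria on two
unrelated machines have makespan at most the total minimum processing time.
`D₁, D₂ ≥ 0` are the current loads of machines 1 and 2, and `a j`, `b j ≥ 0` are the
processing times of job `j` on machines 1 and 2.  With
`Φ(t) := max (D₁ + a (t+1), D₂ + Σ_{j=s+1}^t b j)`, the two hypotheses encode that job
`n'` chooses machine 2 in a 1-lookahead equilibrium, believing that job `n'+1` would
choose machine 1 after it; the conclusion is `Φ(n') ≤ Φ(n'−1) + min (a (n'+1)) (b (n'+1))`. -/
theorem phi_step (D₁ D₂ : ℝ) (hD₁ : 0 ≤ D₁) (hD₂ : 0 ≤ D₂)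
    (s : ℤ) (a b : ℤ → ℝ) (ha : ∀ j, 0 ≤ a j) (hb : ∀ j, 0 ≤ b j)
    (n' : ℤ) (hn' : s + 1 ≤ n')
    (h1 : D₁ + a n' + a (n' + 1) ≤
      D₂ + (∑ j ∈ Finset.Icc (s + 1) (n' - 1), b j) + b (n' + 1))
    (h2 : D₂ + (∑ j ∈ Finset.Icc (s + 1) n', b j) ≤ D₁ + a n' + a (n' + 1)) :
    max (D₁ + a (n' + 1)) (D₂ + ∑ j ∈ Finset.Icc (s + 1) n', b j) ≤
      max (D₁ + a n') (D₂ + ∑ j ∈ Finset.Icc (s + 1) (n' - 1), b j) +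
        min (a (n' + 1)) (b (n' + 1)) := by
  have hset : Finset.Icc (s + 1) n' = insert n' (Finset.Icc (s + 1) (n' - 1)) := by
    ext x; simp only [Finset.mem_Icc, Finset.mem_insert]; omega
  have hnotmem : n' ∉ Finset.Icc (s + 1) (n' - 1) := by
    simp only [Finset.mem_Icc]; omega
  have hsplit : (∑ j ∈ Finset.Icc (s + 1) n', b j)
      = (∑ j ∈ Finset.Icc (s + 1) (n' - 1), b j) + b n' := by
    rw [hset, Finset.sum_insert hnotmem]; ring
  rw [hsplit] at h2 ⊢
  set S := ∑ j ∈ Finset.Icc (s + 1) (n' - 1), b j with hS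
  have hM1 : D₁ + a n' ≤ max (D₁ + a n') (D₂ + S) := le_max_left _ _
  have hM2 : D₂ + S ≤ max (D₁ + a n') (D₂ + S) := le_max_right _ _
  have han := ha n'
  have han1 := ha (n' + 1)
  have hbn1 := hb (n' + 1)
  rcases le_total (a (n' + 1)) (b (n' + 1)) with h | h
  · rw [min_eq_left h, max_le_iff]
    constructor
    · nlinarith [le_max_left (D₁ + a n') (D₂ + S)]
    · nlinarith [le_max_left (D₁ + a n') (D₂ + S)]
  · rw [min_eq_right h, max_le_iff]
    constructor
    · nlinarith [le_max_right (D₁ + a n') (D₂ + S)]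
    · nlinarith [le_max_right (D₁ + a n') (D₂ + S)]
end
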